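/- In the two-parameter quantum group U_q(g) of type G₂, one has [[[x₁,x₂],x₂], x₂⁻] = (1 + q)(1 − q⁻²)·[x₁,x₂]. -/

import Mathlib

theorem stmt13 (k U : Type) [Field k] [Ring U] [Algebra k U]
    (q p12 p21 : kˣ) (hq : (p12:k) * (p21:k) = (q:k)⁻¹ ^ 3)
    (x1 x2 x1m x2m : U) (g1 g2 f1 f2 : Uˣ)
    (hg1g2 : (g1:U) * g2 = (g2:U) * g1)
    (hg1f1 : (g1:U) * f1 = (f1:U) * g1)
    (hg1f2 : (g1:U) * f2 = (f2:U) * g1)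
    (hg2f1 : (g2:U) * f1 = (f1:U) * g2)
    (hg2f2 : (g2:U) * f2 = (f2:U) * g2)
    (hf1f2 : (f1:U) * f2 = (f2:U) * f1)
    (hx1g1 : x1 * g1 = ((q:k)^3) • ((g1:U) * x1))
    (hx1g2 : x1 * g2 = (p12:k) • ((g2:U) * x1))
    (hx2g1 : x2 * g1 = (p21:k) • ((g1:U) * x2))
    (hx2g2 : x2 * g2 = (q:k) • ((g2:U) * x2))
    (hx1f1 : x1 * f1 = ((q:k)^3) • ((f1:U) * x1))
    (hx1f2 : x1 * f2 = (p21:k) • ((f2:U) * x1))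
    (hx2f1 : x2 * f1 = (p12:k) • ((f1:U) * x2))
    (hx2f2 : x2 * f2 = (q:k) • ((f2:U) * x2))
    (hx1mg1 : x1m * g1 = ((q:k)^3)⁻¹ • ((g1:U) * x1m))
    (hx1mg2 : x1m * g2 = (p12:k)⁻¹ • ((g2:U) * x1m))
    (hx2mg1 : x2m * g1 = (p21:k)⁻¹ • ((g1:U) * x2m))
    (hx2mg2 : x2m * g2 = (q:k)⁻¹ • ((g2:U) * x2m))
    (hx1mf1 : x1m * f1 = ((q:k)^3)⁻¹ • ((f1:U) * x1m))
    (hx1mf2 : x1m * f2 = (p21:k)⁻¹ • ((f2:U) * x1m))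
    (hx2mf1 : x2m * f1 = (p12:k)⁻¹ • ((f1:U) * x2m))
    (hx2mf2 : x2m * f2 = (q:k)⁻¹ • ((f2:U) * x2m))
    (h11 : x1 * x1m - ((q:k)^3) • (x1m * x1) = 1 - (g1:U) * f1)
    (h12 : x1 * x2m - (p21:k) • (x2m * x1) = 0)
    (h21 : x2 * x1m - (p12:k) • (x1m * x2) = 0)
    (h22 : x2 * x2m - (q:k) • (x2m * x2) = 1 - (g2:U) * f2) :
    ((x1 * x2 - (p12:k) • (x2 * x1)) * x2 - ((p12:k) * (q:k)) • (x2 * (x1 * x2 - (p12:k) • (x2 * x1)))) * x2m - ((p21:k) * (q:k)^2) • (x2m * ((x1 * x2 - (p12:k) • (x2 * x1)) * x2 - ((p12:k) * (q:k)) • (x2 * (x1 * x2 - (p12:k) • (x2 * x1))))) = ((1 + (q:k)) * (1 - (q:k)⁻¹^2)) • (x1 * x2 - (p12:k) • (x2 * x1)) := by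
  set E : U := (g2:U) * f2 with hE
  have hA1 : x2 * x2m = (q:k) • (x2m * x2) + 1 - E := by
    have h := sub_eq_iff_eq_add.mp h22
    rw [h]; abel
  have hA2 : x1 * x2m = (p21:k) • (x2m * x1) := sub_eq_zero.mp h12
  have hE1 : x1 * E = ((p12:k) * (p21:k)) • (E * x1) := by
    rw [hE, ← mul_assoc, hx1g2, smul_mul_assoc, mul_assoc, hx1f2, mul_smul_comm, smul_smul,
      mul_assoc]
  have hE2 : x2 * E = ((q:k) * (q:k)) • (E * x2) := by
    rw [hE, ← mul_assoc, hx2g2, smul_mul_assoc, mul_assoc, hx2f2, mul_smul_comm, smul_smul,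
      mul_assoc]
  have gA1 : ∀ u : U, x2 * (x2m * u) = (q:k) • (x2m * (x2 * u)) + u - E * u := by
    intro u
    rw [← mul_assoc, hA1, sub_mul, add_mul, smul_mul_assoc, mul_assoc, one_mul]
  have gA2 : ∀ u : U, x1 * (x2m * u) = (p21:k) • (x2m * (x1 * u)) := by
    intro u
    rw [← mul_assoc, hA2, smul_mul_assoc, mul_assoc]
  have gE1 : ∀ u : U, x1 * (E * u) = ((p12:k) * (p21:k)) • (E * (x1 * u)) := by
    intro u
    rw [← mul_assoc, hE1, smul_mul_assoc, mul_assoc]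
  have gE2 : ∀ u : U, x2 * (E * u) = ((q:k) * (q:k)) • (E * (x2 * u)) := by
    intro u
    rw [← mul_assoc, hE2, smul_mul_assoc, mul_assoc]
  simp only [mul_assoc, sub_mul, add_mul, smul_mul_assoc, mul_sub, mul_add, mul_smul_comm,
    smul_sub, smul_add, smul_smul, one_mul, mul_one, hA1, hA2, hE1, hE2, gA1, gA2, gE1, gE2]
  have hq' : (p12:k) * (p21:k) * (q:k)^3 = 1 := by
    rw [hq, inv_pow]
    exact inv_mul_cancel₀ (pow_ne_zero 3 q.ne_zero)
  match_scalars
  all_goals field_simp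
  all_goals try ring
  · linear_combination (-1 - (q:k)) * hq'
  · linear_combination (1 + (q:k)) * hq'
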